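/- Let Q_I be a k1 × m1 matrix and Q_II a k2 × m2 matrix over GF(2), and let Q be the (k1+k2) × (m1+m2) block-diagonal matrix with blocks Q_I and Q_II, with parity-check matrix H = [Qᵀ | I_{m1+m2}]. Suppose the syndrome map (e_a, e_p) ↦ e_a·Q_I + e_p is injective on the set of pairs (e_a, e_p) ∈ GF(2)^{k1} × GF(2)^{m1} with wt(e_a) + wt(e_p) ≤ 1, and likewise the map (e_b, e_q) ↦ e_b·Q_II + e_q is injective on pairs with wt(e_b) + wt(e_q) ≤ 1. Then the full syndrome map e ↦ e·Hᵀ is injective on the set of error vectors e = (e_a, e_b, e_p, e_q) ∈ GF(2)^{k1+k2+m1+m2} satisfying both wt(e_a) + wt(e_p) ≤ 1 and wt(e_b) + wt(e_q) ≤ 1; i.e., any simultaneous combination of at most one bit error among the Type I coordinates and at most one bit error among the Type II coordinates is uniquely determined by the syndrome. -/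

import Mathlib

open Matrix

/-- For the block-diagonal `Q = diag(Q_I, Q_II)` over GF(2) with parity-check
matrix `H = [Qᵀ | I]`: if the block syndrome map `(e_a, e_p) ↦ e_a·Q_I + e_p` is injective
on pairs of total Hamming weight at most 1, and likewise for `(e_b, e_q) ↦ e_b·Q_II + e_q`,
then the full syndrome map `e ↦ e·Hᵀ` is injective on the set of error vectors
`e = (e_a, e_b, e_p, e_q)` with `wt(e_a) + wt(e_p) ≤ 1` and `wt(e_b) + wt(e_q) ≤ 1`. -/
theorem stmt_9 (k1 k2 m1 m2 : ℕ)
    (QI : Matrix (Fin k1) (Fin m1) (ZMod 2))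
    (QII : Matrix (Fin k2) (Fin m2) (ZMod 2))
    (hI : Set.InjOn
      (fun ep : (Fin k1 → ZMod 2) × (Fin m1 → ZMod 2) => Matrix.vecMul ep.1 QI + ep.2)
      {ep | hammingNorm ep.1 + hammingNorm ep.2 ≤ 1})
    (hII : Set.InjOn
      (fun eq : (Fin k2 → ZMod 2) × (Fin m2 → ZMod 2) => Matrix.vecMul eq.1 QII + eq.2)
      {eq | hammingNorm eq.1 + hammingNorm eq.2 ≤ 1}) :
    Set.InjOn
      (fun e : (Fin k1 ⊕ Fin k2) ⊕ (Fin m1 ⊕ Fin m2) → ZMod 2 =>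
        Matrix.vecMul e
          (Matrix.fromCols ((Matrix.fromBlocks QI 0 0 QII)ᵀ)
            (1 : Matrix (Fin m1 ⊕ Fin m2) (Fin m1 ⊕ Fin m2) (ZMod 2)))ᵀ)
      {e | hammingNorm (fun i => e (Sum.inl (Sum.inl i)))
              + hammingNorm (fun j => e (Sum.inr (Sum.inl j))) ≤ 1 ∧
           hammingNorm (fun i => e (Sum.inl (Sum.inr i)))
              + hammingNorm (fun j => e (Sum.inr (Sum.inr j))) ≤ 1} := by
  have key : ∀ g : (Fin k1 ⊕ Fin k2) ⊕ (Fin m1 ⊕ Fin m2) → ZMod 2,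
      Matrix.vecMul g (Matrix.fromCols ((Matrix.fromBlocks QI 0 0 QII)ᵀ)
            (1 : Matrix (Fin m1 ⊕ Fin m2) (Fin m1 ⊕ Fin m2) (ZMod 2)))ᵀ =
      Sum.elim
        (Matrix.vecMul (fun a => g (Sum.inl (Sum.inl a))) QI + fun j => g (Sum.inr (Sum.inl j)))
        (Matrix.vecMul (fun b => g (Sum.inl (Sum.inr b))) QII + fun j => g (Sum.inr (Sum.inr j))) := by
    intro g
    have hg : g = Sum.elim
        (Sum.elim (fun a => g (Sum.inl (Sum.inl a))) (fun b => g (Sum.inl (Sum.inr b))))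
        (fun j => g (Sum.inr j)) := by
      funext x; rcases x with (a | b) | j <;> rfl
    rw [Matrix.transpose_fromCols, Matrix.transpose_transpose, Matrix.transpose_one]
    conv_lhs => rw [hg]
    rw [Matrix.sumElim_vecMul_fromRows, Matrix.vecMul_one, Matrix.vecMul_fromBlocks]
    funext x
    rcases x with j | j <;> simp
  intro e he f hf h
  simp only [key] at h
  have h1 : (Matrix.vecMul (fun a => e (Sum.inl (Sum.inl a))) QI + fun j => e (Sum.inr (Sum.inl j)))
      = (Matrix.vecMul (fun a => f (Sum.inl (Sum.inl a))) QI + fun j => f (Sum.inr (Sum.inl j))) := by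
    funext j; exact congrFun h (Sum.inl j)
  have h2 : (Matrix.vecMul (fun b => e (Sum.inl (Sum.inr b))) QII + fun j => e (Sum.inr (Sum.inr j)))
      = (Matrix.vecMul (fun b => f (Sum.inl (Sum.inr b))) QII + fun j => f (Sum.inr (Sum.inr j))) := by
    funext j; exact congrFun h (Sum.inr j)
  have e1 : ((fun a => e (Sum.inl (Sum.inl a)), fun j => e (Sum.inr (Sum.inl j))) :
      (Fin k1 → ZMod 2) × (Fin m1 → ZMod 2))
      = (fun a => f (Sum.inl (Sum.inl a)), fun j => f (Sum.inr (Sum.inl j))) :=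
    hI he.1 hf.1 h1
  have e2 : ((fun b => e (Sum.inl (Sum.inr b)), fun j => e (Sum.inr (Sum.inr j))) :
      (Fin k2 → ZMod 2) × (Fin m2 → ZMod 2))
      = (fun b => f (Sum.inl (Sum.inr b)), fun j => f (Sum.inr (Sum.inr j))) :=
    hII he.2 hf.2 h2
  rw [Prod.mk.injEq] at e1 e2
  funext x
  rcases x with (a | b) | (j | j)
  · exact congrFun e1.1 a
  · exact congrFun e2.1 b
  · exact congrFun e1.2 j
  · exact congrFun e2.2 j
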